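/- arXiv:2509.12493 — 2 statements merged into one kernel-verified Lean document; each statement's English description precedes it below -/
import Mathlib

section
/- For L > 0, define f : [0, 2·arctan(1/sinh L)] → ℝ piecewise by f(a) = 2·arctan(e^L·tan(a/2)) for 0 ≤ a ≤ arctan(1/sinh L), and f(a) = arccos(−sin(a)·sinh(L) + cos(a)) for arctan(1/sinh L) ≤ a ≤ 2·arctan(1/sinh L). Then f is continuous, strictly monotonically increasing, maps [0, arctan(1/sinh L)] onto [0, π/2], and maps [arctan(1/sinh L), 2·arctan(1/sinh L)] onto [π/2, π]. -/
open Real Set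

private lemma glue_closed {f : ℝ → ℝ} {s t : Set ℝ} (hs : IsClosed s) (ht : IsClosed t)
    (h1 : ContinuousOn f s) (h2 : ContinuousOn f t) : ContinuousOn f (s ∪ t) := by
  intro x hx
  apply ContinuousWithinAt.union
  · by_cases h : x ∈ s
    · exact h1 x h
    · exact continuousWithinAt_of_notMem_closure (by rwa [hs.closure_eq])
  · by_cases h : x ∈ t
    · exact h2 x h
    · exact continuousWithinAt_of_notMem_closure (by rwa [ht.closure_eq])

theorem piecewise_angle_function_properties (L : ℝ) (hL : 0 < L)
    (f : ℝ → ℝ)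
    (hf : f = fun a =>
      if a ≤ Real.arctan (1 / Real.sinh L) then
        2 * Real.arctan (Real.exp L * Real.tan (a / 2))
      else
        Real.arccos (-Real.sin a * Real.sinh L + Real.cos a)) :
    ContinuousOn f (Icc 0 (2 * Real.arctan (1 / Real.sinh L))) ∧
    StrictMonoOn f (Icc 0 (2 * Real.arctan (1 / Real.sinh L))) ∧
    f '' Icc 0 (Real.arctan (1 / Real.sinh L)) = Icc 0 (π / 2) ∧
    f '' Icc (Real.arctan (1 / Real.sinh L)) (2 * Real.arctan (1 / Real.sinh L)) =
      Icc (π / 2) π := by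
  have hs : 0 < Real.sinh L := Real.sinh_pos_iff.2 hL
  have hc : 0 < Real.cosh L := Real.cosh_pos L
  set t := Real.arctan (1 / Real.sinh L) with ht_def
  have ht0 : 0 < t := by
    rw [ht_def, ← Real.arctan_zero]
    exact Real.arctan_strictMono (by positivity)
  have htlt : t < π / 2 := Real.arctan_lt_pi_div_two _
  -- t = 2 * arctan (exp (-L))
  have hu1 : Real.exp (-L) < 1 := Real.exp_lt_one_iff.2 (by linarith)
  have hu0 : 0 < Real.exp (-L) := Real.exp_pos _
  have hθlt : Real.arctan (Real.exp (-L)) < π / 4 := by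
    rw [← Real.arctan_one]; exact Real.arctan_strictMono hu1
  have hθ0 : 0 < Real.arctan (Real.exp (-L)) := by
    rw [← Real.arctan_zero]; exact Real.arctan_strictMono hu0
  have hkey : t = 2 * Real.arctan (Real.exp (-L)) := by
    have htan : Real.tan (2 * Real.arctan (Real.exp (-L))) = 1 / Real.sinh L := by
      rw [Real.tan_two_mul, Real.tan_arctan, Real.sinh_eq]
      have h1 : 1 - Real.exp (-L) ^ 2 ≠ 0 := by nlinarith
      have h2 : Real.exp L - Real.exp (-L) ≠ 0 := by
        have := Real.exp_lt_exp.2 (show -L < L by linarith); linarith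
      have hx : Real.exp (-L) * Real.exp L = 1 := by
        rw [← Real.exp_add]; simp
      field_simp
      nlinarith [hx]
    rw [ht_def, ← htan, Real.arctan_tan (by linarith) (by linarith)]
  have htan_half : Real.tan (t / 2) = Real.exp (-L) := by
    rw [hkey]; rw [show 2 * Real.arctan (Real.exp (-L)) / 2 = Real.arctan (Real.exp (-L)) by ring,
      Real.tan_arctan]
  -- f t = π/2
  have hft : f t = π / 2 := by
    rw [hf]; simp only [le_refl, if_pos, ← ht_def]
    rw [htan_half, ← Real.exp_add]
    simp [Real.arctan_one]
    ring
  -- cos t and sin t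
  have hsqrt : Real.sqrt (1 + (1 / Real.sinh L) ^ 2) = Real.cosh L / Real.sinh L := by
    have heq : (Real.cosh L / Real.sinh L) ^ 2 = 1 + (1 / Real.sinh L) ^ 2 := by
      rw [div_pow, Real.cosh_sq]; field_simp
    rw [← heq]
    exact Real.sqrt_sq (by positivity)
  have hcost : Real.cos t = Real.sinh L / Real.cosh L := by
    rw [ht_def, Real.cos_arctan, hsqrt]; field_simp
  have hsint : Real.sin t = 1 / Real.cosh L := by
    rw [ht_def, Real.sin_arctan, hsqrt]; field_simp
  -- the identity for the second branch
  have hid : ∀ a : ℝ, -Real.sin a * Real.sinh L + Real.cos a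
      = -(Real.cosh L * Real.sin (a - t)) := by
    intro a
    rw [Real.sin_sub, hcost, hsint]
    field_simp
    ring
  set G : ℝ → ℝ := fun a => Real.arccos (-(Real.cosh L * Real.sin (a - t))) with hG_def
  have hGt : G t = π / 2 := by
    simp [hG_def, Real.arccos_zero]
  have hfeq2 : ∀ a ∈ Icc t (2 * t), f a = G a := by
    intro a ha
    rcases eq_or_lt_of_le ha.1 with h | h
    · rw [← h, hft, hGt]
    · rw [hf]; simp only [← ht_def, if_neg (not_le.2 h)]
      rw [hid a]
  have hfeq1 : ∀ a ∈ Icc 0 t, f a = 2 * Real.arctan (Real.exp L * Real.tan (a / 2)) := by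
    intro a ha
    rw [hf]; simp only [← ht_def, if_pos ha.2]
  have hf0 : f 0 = 0 := by
    rw [hfeq1 0 ⟨le_refl 0, le_of_lt ht0⟩]
    simp
  have hf2t : f (2 * t) = π := by
    rw [hfeq2 (2 * t) ⟨by linarith, le_refl _⟩, hG_def]
    simp only
    rw [show 2 * t - t = t by ring, hsint]
    rw [show -(Real.cosh L * (1 / Real.cosh L)) = -1 by field_simp]
    exact Real.arccos_neg_one
  -- monotonicity on first piece
  have hmono1 : StrictMonoOn f (Icc 0 t) := by
    intro a ha b hb hab
    rw [hfeq1 a ha, hfeq1 b hb]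
    have htan : Real.tan (a / 2) < Real.tan (b / 2) := by
      apply Real.strictMonoOn_tan
      · constructor <;> [linarith [ha.1, pi_pos]; linarith [ha.2]]
      · constructor <;> [linarith [hb.1, pi_pos]; linarith [hb.2]]
      · linarith
    have := mul_lt_mul_of_pos_left htan (Real.exp_pos L)
    have := Real.arctan_strictMono this
    linarith
  -- bounds for the arccos argument
  have harg : ∀ a ∈ Icc t (2 * t), Real.cosh L * Real.sin (a - t) ∈ Icc (0:ℝ) 1 := by
    intro a ha
    have h1 : 0 ≤ a - t := by linarith [ha.1]
    have h2 : a - t ≤ t := by linarith [ha.2]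
    have hsin0 : 0 ≤ Real.sin (a - t) := Real.sin_nonneg_of_nonneg_of_le_pi h1 (by linarith [pi_pos])
    have hsinle : Real.sin (a - t) ≤ Real.sin t := by
      apply Real.strictMonoOn_sin.monotoneOn
      · constructor <;> [linarith [pi_pos]; linarith]
      · constructor <;> [linarith [pi_pos]; linarith]
      · exact h2
    constructor
    · positivity
    · calc Real.cosh L * Real.sin (a - t) ≤ Real.cosh L * Real.sin t :=
            mul_le_mul_of_nonneg_left hsinle (le_of_lt hc)
        _ = 1 := by rw [hsint]; field_simp
  -- monotonicity on second piece
  have hmono2 : StrictMonoOn f (Icc t (2 * t)) := by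
    intro a ha b hb hab
    rw [hfeq2 a ha, hfeq2 b hb, hG_def]
    simp only
    have hsin : Real.sin (a - t) < Real.sin (b - t) := by
      apply Real.strictMonoOn_sin
      · constructor <;> [linarith [ha.1, pi_pos]; linarith [ha.2]]
      · constructor <;> [linarith [hb.1, pi_pos]; linarith [hb.2]]
      · linarith
    have hA := harg a ha
    have hB := harg b hb
    apply Real.strictAntiOn_arccos
    · constructor <;> [linarith [hB.2]; linarith [hB.1]]
    · constructor <;> [linarith [hA.2]; linarith [hA.1]]
    · have := mul_lt_mul_of_pos_left hsin hc; linarith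
  -- continuity on pieces
  have hcont1 : ContinuousOn f (Icc 0 t) := by
    have hF1 : ∀ x ∈ Icc 0 t,
        ContinuousAt (fun a => 2 * Real.arctan (Real.exp L * Real.tan (a / 2))) x := by
      intro x hx
      have hcos : Real.cos (x / 2) ≠ 0 := by
        apply ne_of_gt; apply Real.cos_pos_of_mem_Ioo
        constructor <;> [linarith [hx.1, pi_pos]; linarith [hx.2]]
      have hdiv : ContinuousAt (fun a : ℝ => a / 2) x := continuousAt_id.div_const 2
      have h1 : ContinuousAt (fun a : ℝ => Real.tan (a / 2)) x :=
        ContinuousAt.comp (g := Real.tan) (f := fun a : ℝ => a / 2)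
          (Real.continuousAt_tan.2 hcos) hdiv
      exact continuousAt_const.mul
        ((Real.continuous_arctan.continuousAt).comp (continuousAt_const.mul h1))
    exact ContinuousOn.congr (fun x hx => (hF1 x hx).continuousWithinAt) hfeq1
  have hGcont : Continuous G := by
    exact Real.continuous_arccos.comp
      (continuous_const.mul (Real.continuous_sin.comp (continuous_id.sub continuous_const))).neg
  have hcont2 : ContinuousOn f (Icc t (2 * t)) :=
    ContinuousOn.congr hGcont.continuousOn hfeq2
  have hunion : Icc (0:ℝ) t ∪ Icc t (2 * t) = Icc 0 (2 * t) :=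
    Icc_union_Icc_eq_Icc (le_of_lt ht0) (by linarith)
  have hcont : ContinuousOn f (Icc 0 (2 * t)) := by
    rw [← hunion]
    exact glue_closed isClosed_Icc isClosed_Icc hcont1 hcont2
  -- global strict monotonicity
  have hmono : StrictMonoOn f (Icc 0 (2 * t)) := by
    intro a ha b hb hab
    rcases le_or_gt b t with h | h
    · exact hmono1 ⟨ha.1, by linarith⟩ ⟨hb.1, h⟩ hab
    rcases le_or_gt t a with h' | h'
    · exact hmono2 ⟨h', ha.2⟩ ⟨le_of_lt h, hb.2⟩ hab
    · calc f a < f t := hmono1 ⟨ha.1, le_of_lt h'⟩ ⟨le_of_lt ht0, le_refl t⟩ h'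
        _ < f b := hmono2 ⟨le_refl t, by linarith⟩ ⟨le_of_lt h, hb.2⟩ h
  -- images
  have himg1 : f '' Icc 0 t = Icc 0 (π / 2) := by
    apply Subset.antisymm
    · rintro _ ⟨x, hx, rfl⟩
      constructor
      · rw [← hf0]
        exact hmono1.monotoneOn ⟨le_refl 0, le_of_lt ht0⟩ hx hx.1
      · rw [← hft]
        exact hmono1.monotoneOn hx ⟨le_of_lt ht0, le_refl t⟩ hx.2
    · have := intermediate_value_Icc (le_of_lt ht0) hcont1
      rwa [hf0, hft] at this
  have himg2 : f '' Icc t (2 * t) = Icc (π / 2) π := by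
    apply Subset.antisymm
    · rintro _ ⟨x, hx, rfl⟩
      constructor
      · rw [← hft]
        exact hmono2.monotoneOn ⟨le_refl t, by linarith⟩ hx hx.1
      · rw [← hf2t]
        exact hmono2.monotoneOn hx ⟨by linarith, le_refl _⟩ hx.2
    · have := intermediate_value_Icc (show t ≤ 2 * t by linarith) hcont2
      rwa [hft, hf2t] at this
  exact ⟨hcont, hmono, himg1, himg2⟩
end

section
/- For L > 0 define C_L(r) = 2·arctan(e^L·sinh(r)) for 0 ≤ sinh(r) ≤ e^{−L} and C_L(r) = arccos(1 − 2·tanh²(r)·(1 + sinh(L)/sinh(r))) for e^{−L} ≤ sinh(r) ≤ 1/sinh(L). Then C_L is continuous and monotonically increasing on [0, arcsinh(1/sinh L)], with C_L(0) = 0 (interpreting the second branch limit) and C_L(arcsinh(1/sinh L)) = π. -/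
open Real Set

theorem C_L_continuous_monotone (L : ℝ) (hL : 0 < L)
    (C : ℝ → ℝ)
    (hC : C = fun r =>
      if Real.sinh r ≤ Real.exp (-L) then
        2 * Real.arctan (Real.exp L * Real.sinh r)
      else
        Real.arccos (1 - 2 * Real.tanh r ^ 2 * (1 + Real.sinh L / Real.sinh r))) :
    ContinuousOn C (Icc 0 (Real.arsinh (1 / Real.sinh L))) ∧
    MonotoneOn C (Icc 0 (Real.arsinh (1 / Real.sinh L))) ∧
    C 0 = 0 ∧
    C (Real.arsinh (1 / Real.sinh L)) = π := by
  set m := Real.sinh L with hm_def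
  set e := Real.exp (-L) with he_def
  have hm : 0 < m := Real.sinh_pos_iff.2 hL
  have he : 0 < e := Real.exp_pos _
  have hee : e * Real.exp L = 1 := by rw [← Real.exp_add]; simp
  have hem : e * m < 1 := by
    rw [hm_def, Real.sinh_eq]
    nlinarith [Real.exp_pos (-L), Real.exp_pos L, hee]
  have he_lt : e < 1 / m := by
    rw [lt_div_iff₀ hm]; exact hem
  set R := Real.arsinh (1 / m) with hR_def
  have hsR : Real.sinh R = 1 / m := Real.sinh_arsinh _
  -- arccos is globally antitone
  have arccos_anti : ∀ x y : ℝ, x ≤ y → Real.arccos y ≤ Real.arccos x := by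
    intro x y h
    simp only [Real.arccos_eq_pi_div_two_sub_arcsin]
    linarith [Real.monotone_arcsin h]
  -- junction value: (e^2 + m*e)/(1+e^2) = 1/2
  have hjunc : (e ^ 2 + m * e) / (1 + e ^ 2) = 1 / 2 := by
    rw [hm_def, Real.sinh_eq]
    rw [div_eq_iff (by positivity)]
    nlinarith [hee]
  -- key monotonicity of s ↦ (s^2+m*s)/(1+s^2)
  have key : ∀ s t : ℝ, 0 ≤ s → s ≤ t → t * m ≤ 1 →
      (s ^ 2 + m * s) / (1 + s ^ 2) ≤ (t ^ 2 + m * t) / (1 + t ^ 2) := by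
    intro s t hs hst htm
    rw [div_le_div_iff₀ (by positivity) (by positivity)]
    have h1 : 0 ≤ s + t + m - m * s * t := by nlinarith
    nlinarith [mul_nonneg (sub_nonneg.2 hst) h1]
  -- rewrite the second branch argument
  have hG : ∀ r : ℝ, 0 < r →
      1 - 2 * Real.tanh r ^ 2 * (1 + m / Real.sinh r)
        = 1 - 2 * ((Real.sinh r ^ 2 + m * Real.sinh r) / (1 + Real.sinh r ^ 2)) := by
    intro r hr
    have hs : 0 < Real.sinh r := Real.sinh_pos_iff.2 hr
    have hc : 0 < Real.cosh r := Real.cosh_pos r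
    have hc2 : Real.cosh r ^ 2 = Real.sinh r ^ 2 + 1 := Real.cosh_sq r
    rw [Real.tanh_eq_sinh_div_cosh, div_pow, hc2]
    field_simp
    ring
  -- continuous model
  set F : ℝ → ℝ := fun r =>
    if Real.sinh r ≤ e then 2 * Real.arctan (Real.exp L * Real.sinh r)
    else Real.arccos (1 - 2 * ((Real.sinh r ^ 2 + m * Real.sinh r) / (1 + Real.sinh r ^ 2)))
    with hF_def
  have hFC : EqOn C F (Icc 0 R) := by
    intro r hr
    by_cases h : Real.sinh r ≤ e
    · simp [hC, hF_def, h]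
    · have hr0 : 0 < r := by
        have : 0 < Real.sinh r := lt_trans he (not_le.1 h)
        exact Real.sinh_pos_iff.1 this
      simp only [hC, hF_def, h, if_false]
      rw [hG r hr0]
  have hFcont : Continuous F := by
    rw [hF_def]
    apply Continuous.if_le
    · exact continuous_const.mul (Real.continuous_arctan.comp (continuous_const.mul Real.continuous_sinh))
    · apply Real.continuous_arccos.comp
      apply Continuous.sub continuous_const
      apply Continuous.mul continuous_const
      apply Continuous.div
      · fun_prop
      · fun_prop
      · intro x; positivity
    · exact Real.continuous_sinh
    · exact continuous_const
    · intro x hx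
      rw [hx]
      have h1 : Real.exp L * e = 1 := by rw [mul_comm]; exact hee
      have h2 : 1 - 2 * ((e ^ 2 + m * e) / (1 + e ^ 2)) = 0 := by rw [hjunc]; ring
      rw [h1, Real.arctan_one, h2, Real.arccos_zero]
      ring
  have hmono : MonotoneOn C (Icc 0 R) := by
    intro x hx y hy hxy
    have hsx0 : 0 ≤ Real.sinh x := by
      rw [← Real.sinh_zero]; exact Real.sinh_le_sinh.2 hx.1
    have hsxy : Real.sinh x ≤ Real.sinh y := Real.sinh_le_sinh.2 hxy
    have hsy1 : Real.sinh y * m ≤ 1 := by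
      have := Real.sinh_le_sinh.2 hy.2
      rw [hsR] at this
      rw [← le_div_iff₀ hm]; exact this
    by_cases h1 : Real.sinh x ≤ e
    · by_cases h2 : Real.sinh y ≤ e
      · simp only [hC, h1, h2, if_true]
        have : Real.exp L * Real.sinh x ≤ Real.exp L * Real.sinh y :=
          mul_le_mul_of_nonneg_left hsxy (Real.exp_pos L).le
        linarith [Real.arctan_strictMono.monotone this]
      · -- x in first branch, y in second
        have hy0 : 0 < y := Real.sinh_pos_iff.1 (lt_trans he (not_le.1 h2))
        have hCx : C x ≤ π / 2 := by
          simp only [hC, h1, if_true]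
          have h3 : Real.exp L * Real.sinh x ≤ 1 := by
            calc Real.exp L * Real.sinh x ≤ Real.exp L * e :=
                  mul_le_mul_of_nonneg_left h1 (Real.exp_pos L).le
            _ = 1 := by rw [mul_comm]; exact hee
          have := Real.arctan_strictMono.monotone h3
          rw [Real.arctan_one] at this
          linarith
        have hCy : π / 2 ≤ C y := by
          simp only [hC, h2, if_false]
          rw [hG y hy0]
          have hH : (e ^ 2 + m * e) / (1 + e ^ 2)
              ≤ (Real.sinh y ^ 2 + m * Real.sinh y) / (1 + Real.sinh y ^ 2) :=
            key e (Real.sinh y) he.le (le_of_lt (not_le.1 h2)) hsy1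
          have ht : 1 - 2 * ((Real.sinh y ^ 2 + m * Real.sinh y) / (1 + Real.sinh y ^ 2)) ≤ 0 := by
            rw [hjunc] at hH; linarith
          rw [Real.arccos_eq_pi_div_two_sub_arcsin]
          have := Real.arcsin_nonpos.2 ht
          linarith
        linarith
    · by_cases h2 : Real.sinh y ≤ e
      · exact absurd (hsxy.trans h2) h1
      · have hx0 : 0 < x := Real.sinh_pos_iff.1 (lt_trans he (not_le.1 h1))
        have hy0 : 0 < y := Real.sinh_pos_iff.1 (lt_trans he (not_le.1 h2))
        simp only [hC, h1, h2, if_false]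
        rw [hG x hx0, hG y hy0]
        apply arccos_anti
        have := key (Real.sinh x) (Real.sinh y) hsx0 hsxy hsy1
        linarith
  refine ⟨hFcont.continuousOn.congr hFC, hmono, ?_, ?_⟩
  · simp [hC, Real.sinh_zero, he.le, Real.arctan_zero]
  · have hcond : ¬ Real.sinh R ≤ e := by rw [hsR]; exact not_le.2 he_lt
    show C R = π
    have hc2 : Real.cosh R ^ 2 = Real.sinh R ^ 2 + 1 := Real.cosh_sq R
    have harg : 1 - 2 * Real.tanh R ^ 2 * (1 + m / Real.sinh R) = -1 := by
      rw [Real.tanh_eq_sinh_div_cosh, div_pow, hc2, hsR]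
      field_simp
      ring
    simp only [hC, hcond, if_false]
    rw [harg, Real.arccos_neg_one]
end
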